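/- Let W ⊆ Σ* and let ∼ be an equivalence relation on W. Then ∼ is right-invariant if and only if for all α, β ∈ W with α ∼ β and all φ ∈ Σ⁺: (φ ∈ K(T_α) ⟺ φ ∈ K(T_β)) and (φ ∈ K(T_α) ⟹ αφ ∼ βφ). -/

import Mathlib

/-!
Common framework: generalized automata (GNFAs/GDFAs) over a finite alphabet `A`,
following the paper "A Myhill-Nerode theorem for generalized automata".
Strings over `A` are modeled as `List A`.
-/

/-- A path of edges (from `E`) from a state to a state whose concatenated labels
form the given string. -/
inductive EdgePath {A Q : Type} (E : Set (Q × Q × List A)) : Q → List A → Q → Prop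
  | refl (u : Q) : EdgePath E u [] u
  | step {u v w : Q} {ρ α : List A} :
      (u, v, ρ) ∈ E → EdgePath E v α w → EdgePath E u (ρ ++ α) w

/-- A generalized nondeterministic finite automaton (GNFA) over alphabet `A`
with a finite state type `Q`: a finite set of string-labeled edges, an initial state,
a set of final states; every state is reachable from the initial state and
co-reachable (final, or a path leads from it to a final state). -/
structure GNFA (A Q : Type) where
  E : Set (Q × Q × List A)
  init : Q
  final : Set Q
  finQ : Finite Q
  finE : E.Finite
  reach : ∀ u : Q, ∃ α : List A, EdgePath E init α u
  coreach : ∀ u : Q, ∃ (α : List A) (v : Q), v ∈ final ∧ EdgePath E u α v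

namespace GNFA

variable {A Q : Type}

/-- `I_α`: the set of states reached from the initial state by reading `α`. -/
def Iword (M : GNFA A Q) (α : List A) : Set Q := {u | EdgePath M.E M.init α u}

/-- `I_u`: the set of strings that can be read from the initial state to `u`. -/
def Istate (M : GNFA A Q) (u : Q) : Set (List A) := {α | EdgePath M.E M.init α u}

/-- The language recognized by the automaton. -/
def Lang (M : GNFA A Q) : Set (List A) := {α | ∃ u ∈ M.final, EdgePath M.E M.init α u}

/-- `W(A) = ⋃_{u ∈ Q} I_u`. -/
def WSet (M : GNFA A Q) : Set (List A) := {α | ∃ u : Q, EdgePath M.E M.init α u}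

/-- A GNFA is a GDFA if: no edge is labeled with the empty string, distinct edges
leaving a state have distinct labels, and the labels of edges leaving a state form
a prefix-free set. -/
def IsGDFA (M : GNFA A Q) : Prop :=
  (∀ u v ρ, (u, v, ρ) ∈ M.E → ρ ≠ []) ∧
  (∀ u v v' ρ, (u, v, ρ) ∈ M.E → (u, v', ρ) ∈ M.E → v = v') ∧
  (∀ u v v' ρ ρ', (u, v, ρ) ∈ M.E → (u, v', ρ') ∈ M.E → ρ <+: ρ' → ρ = ρ')

end GNFA

/-- Isomorphism of GNFAs: a bijection of states preserving the initial state,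
final states and labeled edges. -/
def GNFA.Isomorphic {A Q₁ Q₂ : Type} (M : GNFA A Q₁) (N : GNFA A Q₂) : Prop :=
  ∃ φ : Q₁ ≃ Q₂, φ M.init = N.init ∧ (∀ u, u ∈ M.final ↔ φ u ∈ N.final) ∧
    ∀ u v ρ, (u, v, ρ) ∈ M.E ↔ (φ u, φ v, ρ) ∈ N.E

section LangDefs
variable {A : Type}

/-- `Pref L`: the set of prefixes of strings of `L`. -/
def Pref (L : Set (List A)) : Set (List A) := {α | ∃ β ∈ L, α <+: β}

/-- Prefix-free kernel: the strings of `X` having no strict prefix in `X`. -/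
def pfKernel (X : Set (List A)) : Set (List A) :=
  {α ∈ X | ∀ β, β <+: α → β ≠ α → β ∉ X}

/-- `T_α = {ρ ∈ Σ⁺ : αρ ∈ W}`. -/
def Tset (W : Set (List A)) (α : List A) : Set (List A) := {ρ | ρ ≠ [] ∧ α ++ ρ ∈ W}

/-- `W` is locally bounded if `K(T_α)` is finite for every `α ∈ W`. -/
def LocallyBounded (W : Set (List A)) : Prop := ∀ α ∈ W, (pfKernel (Tset W α)).Finite

/-- `r` is an equivalence relation on `W`. -/
def IsEquivOn (W : Set (List A)) (r : List A → List A → Prop) : Prop :=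
  (∀ α ∈ W, r α α) ∧
  (∀ α β, α ∈ W → β ∈ W → r α β → r β α) ∧
  (∀ α β γ, α ∈ W → β ∈ W → γ ∈ W → r α β → r β γ → r α γ)

/-- Right-invariance of an equivalence relation on `W`. -/
def RightInvariant (W : Set (List A)) (r : List A → List A → Prop) : Prop :=
  ∀ α ∈ W, ∀ β ∈ W, r α β → ∀ φ : List A,
    (α ++ φ ∈ W ↔ β ++ φ ∈ W) ∧ (α ++ φ ∈ W → r (α ++ φ) (β ++ φ))

/-- The right-invariant refinement of `r` on `W`. -/
def riRef (W : Set (List A)) (r : List A → List A → Prop) :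
    List A → List A → Prop := fun α β =>
  ∀ φ : List A, (α ++ φ ∈ W ↔ β ++ φ ∈ W) ∧ (α ++ φ ∈ W → r (α ++ φ) (β ++ φ))

/-- The Myhill–Nerode equivalence `≡_{L,W}`: the right-invariant refinement of
`α ∼_{L,W} β ⟺ (α ∈ L ⟺ β ∈ L)`. -/
def mnEquiv (L W : Set (List A)) : List A → List A → Prop :=
  riRef W (fun α β => (α ∈ L ↔ β ∈ L))

/-- The `r`-class of `α` inside `W`. -/
def eqClass (W : Set (List A)) (r : List A → List A → Prop) (α : List A) :
    Set (List A) := {β ∈ W | r α β}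

/-- `r` has finite index on `W`: the set of its classes is finite. -/
def FiniteIndex (W : Set (List A)) (r : List A → List A → Prop) : Prop :=
  {s : Set (List A) | ∃ α ∈ W, s = eqClass W r α}.Finite

/-- `L` is a union of `r`-classes (for `L ⊆ W`). -/
def UnionOfClasses (W : Set (List A)) (r : List A → List A → Prop)
    (L : Set (List A)) : Prop := ∀ α ∈ L, ∀ β ∈ W, r α β → β ∈ L

end LangDefs

namespace GNFA
variable {A Q : Type}

/-- `α ∼_A β ⟺ I_α = I_β` (on `W(A)`). -/
def simA (M : GNFA A Q) : List A → List A → Prop := fun α β => M.Iword α = M.Iword β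

/-- `≡_A`: the right-invariant refinement of `∼_A` on `W(A)`. -/
def equivA (M : GNFA A Q) : List A → List A → Prop := riRef M.WSet M.simA

end GNFA

/-- An equivalence relation `∼` on `W` is right-invariant iff for all `α ∼ β` in `W`
and every nonempty string `φ`: `φ ∈ K(T_α) ⟺ φ ∈ K(T_β)`, and `φ ∈ K(T_α)` implies
`αφ ∼ βφ`. -/
theorem rightInvariant_iff_kernel {A : Type} [Fintype A]
    (W : Set (List A)) (r : List A → List A → Prop) (hEq : IsEquivOn W r) :
    RightInvariant W r ↔
      ∀ α ∈ W, ∀ β ∈ W, r α β → ∀ φ : List A, φ ≠ [] →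
        ((φ ∈ pfKernel (Tset W α) ↔ φ ∈ pfKernel (Tset W β)) ∧
         (φ ∈ pfKernel (Tset W α) → r (α ++ φ) (β ++ φ))) := by
  obtain ⟨hrefl, hsymm, htrans⟩ := hEq
  constructor
  · intro hRI α hα β hβ hr φ hφ
    have hiff : ∀ ψ : List A, (α ++ ψ ∈ W ↔ β ++ ψ ∈ W) := fun ψ => (hRI α hα β hβ hr ψ).1
    constructor
    · constructor
      · rintro ⟨⟨hφne, hαφ⟩, hmin⟩
        refine ⟨⟨hφ, (hiff φ).1 hαφ⟩, ?_⟩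
        rintro χ hpre hne ⟨hχne, hβχ⟩
        exact hmin χ hpre hne ⟨hχne, (hiff χ).2 hβχ⟩
      · rintro ⟨⟨hφne, hβφ⟩, hmin⟩
        refine ⟨⟨hφ, (hiff φ).2 hβφ⟩, ?_⟩
        rintro χ hpre hne ⟨hχne, hαχ⟩
        exact hmin χ hpre hne ⟨hχne, (hiff χ).1 hαχ⟩
    · rintro ⟨⟨hφne, hαφ⟩, _⟩
      exact (hRI α hα β hβ hr φ).2 hαφ
  · intro h
    have key : ∀ n : ℕ, ∀ φ : List A, φ.length ≤ n → ∀ α ∈ W, ∀ β ∈ W, r α β →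
        α ++ φ ∈ W → β ++ φ ∈ W ∧ r (α ++ φ) (β ++ φ) := by
      intro n
      induction n with
      | zero =>
        intro φ hlen α hα β hβ hr _
        have hnil : φ = [] := List.eq_nil_of_length_eq_zero (Nat.le_zero.mp hlen)
        subst hnil
        simpa using ⟨hβ, hr⟩
      | succ n ih =>
        intro φ hlen α hα β hβ hr hαφ
        rcases eq_or_ne φ [] with rfl | hφne
        · simpa using ⟨hβ, hr⟩
        · classical
          have hex : ∃ m, φ.take m ≠ [] ∧ α ++ φ.take m ∈ W :=
            ⟨φ.length, by simp [hφne, hαφ]⟩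
          obtain ⟨hψne, hαψ⟩ := Nat.find_spec hex
          set m := Nat.find hex with hm
          set ψ := φ.take m with hψdef
          have hmle : m ≤ φ.length := Nat.find_le (by simp [hφne, hαφ])
          have hψpre : ψ <+: φ := List.take_prefix m φ
          have hψlen : ψ.length = m := by
            simp [hψdef, Nat.min_eq_left hmle]
          -- ψ ∈ K(T_α)
          have hker : ψ ∈ pfKernel (Tset W α) := by
            refine ⟨⟨hψne, hαψ⟩, ?_⟩
            rintro χ hpre hne ⟨hχne, hαχ⟩
            have hχφ : χ <+: φ := hpre.trans hψpre
            have hχeq : χ = φ.take χ.length := List.prefix_iff_eq_take.mp hχφ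
            have hχlt : χ.length < m := by
              have hle : χ.length ≤ ψ.length := hpre.length_le
              rcases lt_or_eq_of_le hle with hlt | heq
              · omega
              · exfalso
                apply hne
                have : χ = φ.take ψ.length := by rw [← heq] at *; exact hχeq
                rw [this, hψlen]
            exact Nat.find_min hex hχlt ⟨by rwa [← hχeq], by rwa [← hχeq]⟩
          obtain ⟨hkiff, hkimp⟩ := h α hα β hβ hr ψ hψne
          have hkerβ : ψ ∈ pfKernel (Tset W β) := hkiff.mp hker
          have hβψ : β ++ ψ ∈ W := hkerβ.1.2
          have hrψ : r (α ++ ψ) (β ++ ψ) := hkimp hker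
          have hmpos : 0 < m := by
            rcases Nat.eq_zero_or_pos m with h0 | h0
            · exfalso; apply hψne; simp [hψdef, h0]
            · exact h0
          have hdroplen : (φ.drop m).length ≤ n := by
            have : (φ.drop m).length = φ.length - m := List.length_drop
            omega
          have hsplit : ψ ++ φ.drop m = φ := List.take_append_drop m φ
          have hαψW : α ++ ψ ∈ W := hαψ
          have hαφ' : (α ++ ψ) ++ φ.drop m ∈ W := by
            rw [List.append_assoc, hsplit]; exact hαφ
          obtain ⟨h1, h2⟩ := ih (φ.drop m) hdroplen (α ++ ψ) hαψW (β ++ ψ) hβψ hrψ hαφ'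
          constructor
          · rw [List.append_assoc, hsplit] at h1; exact h1
          · rw [List.append_assoc, hsplit, List.append_assoc, hsplit] at h2; exact h2
    intro α hα β hβ hr φ
    refine ⟨⟨fun hw => (key φ.length φ le_rfl α hα β hβ hr hw).1,
      fun hw => (key φ.length φ le_rfl β hβ α hα (hsymm α β hα hβ hr) hw).1⟩,
      fun hw => (key φ.length φ le_rfl α hα β hβ hr hw).2⟩
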